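/- Let K be a field, a, b, λ, μ ∈ K with μ² = λ³ + aλ + b, f = Y²Z − X³ − aXZ² − bZ³ ∈ R = K[X,Y,Z], and P = −X² − λXZ − (a + λ²)Z². If g, h ∈ R satisfy g(Y − μZ) + h(X − λZ) ∈ (f), then (g, h) lies in the R-submodule of R² generated by (X − λZ, μZ − Y), (Z(Y + μZ), P), and f·R². -/

import Mathlib

open MvPolynomial

noncomputable def shiftHom {K : Type*} [Field K] (lam mu : K) :
    MvPolynomial (Fin 3) K →ₐ[K] MvPolynomial (Fin 3) K :=
  aeval fun i => ![MvPolynomial.X 0 - C lam * MvPolynomial.X 2,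
    MvPolynomial.X 1 - C mu * MvPolynomial.X 2, MvPolynomial.X 2] i

noncomputable def shiftEquiv {K : Type*} [Field K] (lam mu : K) :
    MvPolynomial (Fin 3) K ≃ₐ[K] MvPolynomial (Fin 3) K :=
  AlgEquiv.ofAlgHom (shiftHom lam mu) (shiftHom (-lam) (-mu))
    (by
      apply MvPolynomial.algHom_ext
      intro i
      fin_cases i <;>
        simp [shiftHom, Matrix.cons_val_one, Matrix.head_cons, map_sub, map_mul, map_add])
    (by
      apply MvPolynomial.algHom_ext
      intro i
      fin_cases i <;>
        simp [shiftHom, Matrix.cons_val_one, Matrix.head_cons, map_sub, map_mul, map_add])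

lemma shiftEquiv_X0 {K : Type*} [Field K] (lam mu : K) :
    shiftEquiv lam mu (MvPolynomial.X 0) = MvPolynomial.X 0 - C lam * MvPolynomial.X 2 := by
  simp [shiftEquiv, shiftHom]

lemma shiftEquiv_X1 {K : Type*} [Field K] (lam mu : K) :
    shiftEquiv lam mu (MvPolynomial.X 1) = MvPolynomial.X 1 - C mu * MvPolynomial.X 2 := by
  simp [shiftEquiv, shiftHom, Matrix.cons_val_one, Matrix.head_cons]

lemma primeX0 {K : Type*} [Field K] : Prime (MvPolynomial.X 0 : MvPolynomial (Fin 3) K) := by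
  rw [(MulEquiv.prime_iff (finSuccEquiv K 2).toMulEquiv).symm]
  simpa [finSuccEquiv_X_zero] using Polynomial.prime_X

lemma prime_lin0 {K : Type*} [Field K] (lam mu : K) :
    Prime (MvPolynomial.X 0 - C lam * MvPolynomial.X 2 : MvPolynomial (Fin 3) K) := by
  rw [← shiftEquiv_X0 lam mu]
  exact (MulEquiv.prime_iff (shiftEquiv lam mu).toMulEquiv).mpr primeX0

lemma not_dvd_lin {K : Type*} [Field K] (lam mu : K) :
    ¬ (MvPolynomial.X 0 - C lam * MvPolynomial.X 2 : MvPolynomial (Fin 3) K) ∣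
      (MvPolynomial.X 1 - C mu * MvPolynomial.X 2) := by
  rw [← shiftEquiv_X0 lam mu, ← shiftEquiv_X1 lam mu]
  intro hdvd
  have := map_dvd (shiftEquiv lam mu).symm.toAlgHom hdvd
  simp only [AlgEquiv.toAlgHom_apply, AlgEquiv.symm_apply_apply] at this
  rw [MvPolynomial.X_dvd_X] at this
  exact (by decide : ¬ ((0 : Fin 3) = 1)) this

theorem stmt_15 (K : Type*) [Field K] (a b lam mu : K)
    (hpt : mu ^ 2 = lam ^ 3 + a * lam + b)
    (g h : MvPolynomial (Fin 3) K)
    (hgh : g * (MvPolynomial.X 1 - C mu * MvPolynomial.X 2)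
         + h * (MvPolynomial.X 0 - C lam * MvPolynomial.X 2) ∈
      Ideal.span {(MvPolynomial.X 1 ^ 2 * MvPolynomial.X 2 - MvPolynomial.X 0 ^ 3 -
        C a * MvPolynomial.X 0 * MvPolynomial.X 2 ^ 2 - C b * MvPolynomial.X 2 ^ 3 :
        MvPolynomial (Fin 3) K)}) :
    letI X : MvPolynomial (Fin 3) K := MvPolynomial.X 0
    letI Y : MvPolynomial (Fin 3) K := MvPolynomial.X 1
    letI Z : MvPolynomial (Fin 3) K := MvPolynomial.X 2
    letI f : MvPolynomial (Fin 3) K := Y ^ 2 * Z - X ^ 3 - C a * X * Z ^ 2 - C b * Z ^ 3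
    letI P : MvPolynomial (Fin 3) K := -X ^ 2 - C lam * X * Z - C (a + lam ^ 2) * Z ^ 2
    ∃ c₁ c₂ u₁ u₂ : MvPolynomial (Fin 3) K,
      g = c₁ * (X - C lam * Z) + c₂ * (Z * (Y + C mu * Z)) + f * u₁ ∧
      h = c₁ * (C mu * Z - Y) + c₂ * P + f * u₂ := by
  set X : MvPolynomial (Fin 3) K := MvPolynomial.X 0 with hX
  set Y : MvPolynomial (Fin 3) K := MvPolynomial.X 1 with hY
  set Z : MvPolynomial (Fin 3) K := MvPolynomial.X 2 with hZ
  set f : MvPolynomial (Fin 3) K := Y ^ 2 * Z - X ^ 3 - C a * X * Z ^ 2 - C b * Z ^ 3 with hf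
  set P : MvPolynomial (Fin 3) K := -X ^ 2 - C lam * X * Z - C (a + lam ^ 2) * Z ^ 2 with hP
  rw [Ideal.mem_span_singleton] at hgh
  obtain ⟨q, hq⟩ := hgh
  have hC : (C mu ^ 2 : MvPolynomial (Fin 3) K) = C lam ^ 3 + C a * C lam + C b := by
    rw [← C_pow, hpt]; simp [C_add, C_mul, C_pow]
  have hCal : (C (a + lam ^ 2) : MvPolynomial (Fin 3) K) = C a + C lam ^ 2 := by
    simp [C_add, C_pow]
  have key : f = (Y - C mu * Z) * (Z * (Y + C mu * Z)) + (X - C lam * Z) * P := by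
    rw [hf, hP]
    linear_combination (X * Z ^ 2 - C lam * Z ^ 3) * hCal + Z ^ 3 * hC
  -- A * (Y - mu Z) = -(B) * (X - lam Z)
  set p1 : MvPolynomial (Fin 3) K := X - C lam * Z with hp1def
  set p2 : MvPolynomial (Fin 3) K := Y - C mu * Z with hp2def
  have hAB : (g - q * (Z * (Y + C mu * Z))) * p2 = (q * P - h) * p1 := by
    linear_combination hq + q * key
  have hdvd : p1 ∣ (g - q * (Z * (Y + C mu * Z))) := by
    have : p1 ∣ (g - q * (Z * (Y + C mu * Z))) * p2 := ⟨q * P - h, by linear_combination hAB⟩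
    rcases (prime_lin0 lam mu).2.2 _ _ this with h1 | h2
    · exact h1
    · exact absurd h2 (not_dvd_lin lam mu)
  obtain ⟨c₁, hc₁⟩ := hdvd
  refine ⟨c₁, q, 0, 0, ?_, ?_⟩
  · rw [mul_zero, add_zero]
    linear_combination hc₁
  · rw [mul_zero, add_zero]
    have hcancel : (h - (c₁ * (C mu * Z - Y) + q * P)) * p1 = 0 := by
      linear_combination hAB - p2 * hc₁
    rcases mul_eq_zero.mp hcancel with h0 | h0
    · linear_combination h0
    · exact absurd h0 (prime_lin0 lam mu).1
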